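/- Let m ≥ 3, let P = {(i_1,i_2), (i_2,i_3), ..., (i_{m-1},i_m)} be a directed path on pairwise distinct vertices i_1,...,i_m ∈ V of length m-1 with i_m ≠ i_1, and let U ⊊ P be a strict subset of P. Then the path inequality ∑_{(i,j) ∈ P} z_{i,j} + ∑_{(i,j) ∈ U} y_{i,j} + y_{i_1,i_m} ≤ m - 1 is valid for the cycle clustering polytope CCP(n,m); equivalently, for every surjective map κ : V → ZMod m, if for every arc (i,j) ∈ P either κ(j) = κ(i) + 1, or (i,j) ∈ U and κ(i) = κ(j), then κ(i_1) ≠ κ(i_m). -/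

import Mathlib

open scoped BigOperators

noncomputable section

/-- Coordinate index set for the incidence vectors of cycle clusterings:
`x`-variables indexed by `(i,s)`, `y`-variables indexed by pairs `i < j`,
and `z`-variables indexed by arcs `i ≠ j`. -/
abbrev CCIdx (n m : ℕ) : Type :=
  (Fin n × ZMod m) ⊕ {p : Fin n × Fin n // p.1 < p.2} ⊕ {p : Fin n × Fin n // p.1 ≠ p.2}

/-- Index of the variable `x_{i,s}`. -/
def xIdx {n m : ℕ} (i : Fin n) (s : ZMod m) : CCIdx n m := Sum.inl (i, s)

/-- Index of the variable `y_{i,j}` (with the convention `y_{i,j} = y_{j,i}`). -/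
def yIdx {n m : ℕ} (i j : Fin n) (h : i ≠ j) : CCIdx n m :=
  if hij : i < j then Sum.inr (Sum.inl ⟨(i, j), hij⟩)
  else Sum.inr (Sum.inl ⟨(j, i), lt_of_le_of_ne (not_lt.mp hij) h.symm⟩)

/-- Index of the variable `z_{i,j}`. -/
def zIdx {n m : ℕ} (i j : Fin n) (h : i ≠ j) : CCIdx n m := Sum.inr (Sum.inr ⟨(i, j), h⟩)

/-- Incidence vector of a clustering `κ : V → ZMod m`:
`x_{i,s} = 1` iff `κ i = s`, `y_{i,j} = 1` iff `κ i = κ j`,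
`z_{i,j} = 1` iff `κ j = κ i + 1`. -/
def incVec {n m : ℕ} (κ : Fin n → ZMod m) : CCIdx n m → ℝ :=
  Sum.elim (fun p => if κ p.1 = p.2 then 1 else 0)
    (Sum.elim (fun p => if κ p.val.1 = κ p.val.2 then 1 else 0)
      (fun p => if κ p.val.2 = κ p.val.1 + 1 then 1 else 0))

/-- The cycle clustering polytope `CCP(n,m)`: the convex hull of the incidence
vectors of all feasible clusterings, i.e. all surjective maps `κ : V → ZMod m`. -/
def CCP (n m : ℕ) : Set (CCIdx n m → ℝ) :=
  convexHull ℝ {v | ∃ κ : Fin n → ZMod m, Function.Surjective κ ∧ v = incVec κ}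

/-- The `x_{i,s}`-coordinate of a point. -/
def Xc {n m : ℕ} (v : CCIdx n m → ℝ) (i : Fin n) (s : ZMod m) : ℝ := v (xIdx i s)

/-- The `y_{i,j}`-coordinate of a point (junk value `0` on the diagonal). -/
def Yc {n m : ℕ} (v : CCIdx n m → ℝ) (i j : Fin n) : ℝ :=
  if h : i ≠ j then v (yIdx i j h) else 0

/-- The `z_{i,j}`-coordinate of a point (junk value `0` on the diagonal). -/
def Zc {n m : ℕ} (v : CCIdx n m → ℝ) (i j : Fin n) : ℝ :=
  if h : i ≠ j then v (zIdx i j h) else 0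

/-- The dimension of (the affine hull of) `CCP(n,m)`. -/
def ccpDim (n m : ℕ) : ℕ :=
  Module.finrank ℝ (affineSpan ℝ (CCP n m)).direction


lemma Zc_incVec {n m : ℕ} (κ : Fin n → ZMod m) (i j : Fin n) (h : i ≠ j) :
    Zc (incVec κ) i j = if κ j = κ i + 1 then 1 else 0 := by
  simp [Zc, incVec, zIdx, h]

lemma Yc_incVec {n m : ℕ} (κ : Fin n → ZMod m) (i j : Fin n) (h : i ≠ j) :
    Yc (incVec κ) i j = if κ i = κ j then 1 else 0 := by
  rw [Yc, dif_pos h]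
  unfold yIdx
  split_ifs with h1 <;> simp [incVec, eq_comm] <;> simp_all

lemma Zc_combo {n m : ℕ} (a b : ℝ) (v w : CCIdx n m → ℝ) (i j : Fin n) :
    Zc (a • v + b • w) i j = a * Zc v i j + b * Zc w i j := by
  unfold Zc; split_ifs <;> simp

lemma Yc_combo {n m : ℕ} (a b : ℝ) (v w : CCIdx n m → ℝ) (i j : Fin n) :
    Yc (a • v + b • w) i j = a * Yc v i j + b * Yc w i j := by
  unfold Yc; split_ifs <;> simp

lemma path_key (n m : ℕ) (hm : 3 ≤ m) (c : ℕ → Fin n) (U : Finset ℕ)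
    (hU : U ⊂ Finset.range (m - 1)) (κ : Fin n → ZMod m)
    (hstep : ∀ t < m - 1, κ (c (t + 1)) = κ (c t) + 1 ∨ (t ∈ U ∧ κ (c t) = κ (c (t + 1)))) :
    κ (c 0) ≠ κ (c (m - 1)) := by
  haveI : NeZero m := ⟨by omega⟩
  have hone : (1 : ZMod m) ≠ 0 := by
    haveI : Fact (1 < m) := ⟨by omega⟩
    exact one_ne_zero
  set k : ℕ → ℕ := fun t => ((Finset.range t).filter (fun s => κ (c (s + 1)) = κ (c s) + 1)).card with hk
  have claim : ∀ t ≤ m - 1, κ (c t) = κ (c 0) + (k t : ZMod m) := by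
    intro t ht
    induction t with
    | zero => simp [hk]
    | succ t ih =>
      have ht' : t < m - 1 := by omega
      have iht := ih (by omega)
      have hins : k (t + 1) = (insert t ((Finset.range t).filter (fun s => κ (c (s + 1)) = κ (c s) + 1))).card ∨ True := Or.inr trivial
      rcases hstep t ht' with hs | ⟨hu, he⟩
      · have : k (t + 1) = k t + 1 := by
          simp only [hk, Finset.range_add_one, Finset.filter_insert, if_pos hs]
          rw [Finset.card_insert_of_notMem (by simp)]
        rw [this, hs, iht]
        push_cast
        ring
      · have hns : ¬ (κ (c (t + 1)) = κ (c t) + 1) := by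
          intro hs
          rw [he] at hs
          exact hone (left_eq_add.mp hs)
        have : k (t + 1) = k t := by
          simp only [hk, Finset.range_add_one, Finset.filter_insert, if_neg hns]
        rw [this, ← he, iht]
  intro heq
  have hmeq := claim (m - 1) le_rfl
  rw [← heq] at hmeq
  have hk0 : (k (m - 1) : ZMod m) = 0 := by
    have := hmeq
    rwa [left_eq_add] at this
  have hklt : k (m - 1) < m := by
    have : k (m - 1) ≤ m - 1 := le_trans (Finset.card_filter_le _ _) (by simp)
    omega
  have hkz : k (m - 1) = 0 := by
    have hdvd : m ∣ k (m - 1) := (ZMod.natCast_eq_zero_iff _ _).mp hk0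
    exact Nat.eq_zero_of_dvd_of_lt hdvd hklt
  have hempty : (Finset.range (m - 1)).filter (fun s => κ (c (s + 1)) = κ (c s) + 1) = ∅ :=
    Finset.card_eq_zero.mp hkz
  have hsub : Finset.range (m - 1) ⊆ U := by
    intro t ht
    have htm : t < m - 1 := Finset.mem_range.mp ht
    have hns : ¬ (κ (c (t + 1)) = κ (c t) + 1) := by
      intro hs
      have : t ∈ (Finset.range (m - 1)).filter (fun s => κ (c (s + 1)) = κ (c s) + 1) :=
        Finset.mem_filter.mpr ⟨ht, hs⟩
      simp [hempty] at this
    rcases hstep t htm with hs | ⟨hu, _⟩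
    · exact absurd hs hns
    · exact hu
  exact hU.2 hsub

lemma vertex_bound (n m : ℕ) (hm : 3 ≤ m) (c : ℕ → Fin n)
    (hinj : ∀ t₁ < m, ∀ t₂ < m, c t₁ = c t₂ → t₁ = t₂)
    (U : Finset ℕ) (hU : U ⊂ Finset.range (m - 1)) (κ : Fin n → ZMod m) :
    ∑ t ∈ Finset.range (m - 1), Zc (incVec κ) (c t) (c (t + 1))
      + ∑ t ∈ U, Yc (incVec κ) (c t) (c (t + 1)) + Yc (incVec κ) (c 0) (c (m - 1))
      ≤ (m : ℝ) - 1 := by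
  have hone : (1 : ZMod m) ≠ 0 := by
    haveI : Fact (1 < m) := ⟨by omega⟩
    exact one_ne_zero
  have hne : ∀ t < m - 1, c t ≠ c (t + 1) := by
    intro t ht h
    have := hinj t (by omega) (t + 1) (by omega) h
    omega
  have hne0 : c 0 ≠ c (m - 1) := by
    intro h
    have := hinj 0 (by omega) (m - 1) (by omega) h
    omega
  set z : ℕ → ℝ := fun t => if κ (c (t + 1)) = κ (c t) + 1 then 1 else 0 with hz
  set y : ℕ → ℝ := fun t => if κ (c t) = κ (c (t + 1)) then 1 else 0 with hy
  set yend : ℝ := if κ (c 0) = κ (c (m - 1)) then 1 else 0 with hyend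
  have ez : ∑ t ∈ Finset.range (m - 1), Zc (incVec κ) (c t) (c (t + 1))
      = ∑ t ∈ Finset.range (m - 1), z t := by
    refine Finset.sum_congr rfl fun t ht => ?_
    exact Zc_incVec κ _ _ (hne t (Finset.mem_range.mp ht))
  have ey : ∑ t ∈ U, Yc (incVec κ) (c t) (c (t + 1)) = ∑ t ∈ U, y t := by
    refine Finset.sum_congr rfl fun t ht => ?_
    exact Yc_incVec κ _ _ (hne t (Finset.mem_range.mp (hU.1 ht)))
  have eyend : Yc (incVec κ) (c 0) (c (m - 1)) = yend := Yc_incVec κ _ _ hne0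
  rw [ez, ey, eyend]
  have eU : ∑ t ∈ U, y t = ∑ t ∈ Finset.range (m - 1), (if t ∈ U then y t else 0) := by
    rw [Finset.sum_ite_mem, Finset.inter_eq_right.mpr hU.1]
  rw [eU, ← Finset.sum_add_distrib]
  set g : ℕ → ℝ := fun t => z t + (if t ∈ U then y t else 0) with hg
  have hg1 : ∀ t ∈ Finset.range (m - 1), g t ≤ 1 := by
    intro t _
    simp only [hg, hz, hy]
    by_cases h1 : κ (c (t + 1)) = κ (c t) + 1
    · have h2 : ¬ (κ (c t) = κ (c (t + 1))) := by
        intro h2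
        rw [h2] at h1
        exact hone (left_eq_add.mp h1)
      rw [if_pos h1, if_neg h2]
      split_ifs <;> norm_num
    · have : z t = 0 := if_neg h1
      simp only [hz] at this
      rw [this]
      split_ifs <;> norm_num
  have hyend1 : yend ≤ 1 := by rw [hyend]; split_ifs <;> norm_num
  have hyend0 : 0 ≤ yend := by rw [hyend]; split_ifs <;> norm_num
  have hcast : ((m - 1 : ℕ) : ℝ) = (m : ℝ) - 1 := by
    rw [Nat.cast_sub (by omega)]; norm_num
  by_cases H : ∀ t < m - 1, κ (c (t + 1)) = κ (c t) + 1 ∨ (t ∈ U ∧ κ (c t) = κ (c (t + 1)))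
  · have hzero : yend = 0 := by
      rw [hyend, if_neg (path_key n m hm c U hU κ H)]
    rw [hzero, add_zero]
    calc ∑ t ∈ Finset.range (m - 1), g t ≤ (Finset.range (m - 1)).card • (1 : ℝ) :=
          Finset.sum_le_card_nsmul _ _ _ hg1
      _ = ((m - 1 : ℕ) : ℝ) := by simp
      _ = (m : ℝ) - 1 := hcast
  · push_neg at H
    obtain ⟨t0, ht0, hns, hnu⟩ := H
    have hgt0 : g t0 = 0 := by
      have hz0 : z t0 = 0 := if_neg hns
      by_cases hU0 : t0 ∈ U
      · have hy0 : y t0 = 0 := by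
          refine if_neg fun h => hnu hU0 h
        simp [hg, hz0, hU0, hy0]
      · simp [hg, hz0, hU0]
    have hmem : t0 ∈ Finset.range (m - 1) := Finset.mem_range.mpr ht0
    have hsum : ∑ t ∈ Finset.range (m - 1), g t
        = g t0 + ∑ t ∈ (Finset.range (m - 1)).erase t0, g t :=
      (Finset.add_sum_erase _ _ hmem).symm
    have hcard : ((Finset.range (m - 1)).erase t0).card = m - 2 := by
      rw [Finset.card_erase_of_mem hmem, Finset.card_range]
      omega
    have hrest : ∑ t ∈ (Finset.range (m - 1)).erase t0, g t ≤ (m : ℝ) - 2 := by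
      calc ∑ t ∈ (Finset.range (m - 1)).erase t0, g t
          ≤ ((Finset.range (m - 1)).erase t0).card • (1 : ℝ) :=
            Finset.sum_le_card_nsmul _ _ _ fun t ht => hg1 t (Finset.mem_of_mem_erase ht)
        _ = ((m - 2 : ℕ) : ℝ) := by rw [hcard]; simp
        _ = (m : ℝ) - 2 := by rw [Nat.cast_sub (by omega)]; norm_num
    rw [hsum, hgt0, zero_add]
    linarith

/-- For `m ≥ 3`, a directed path `(c 0, c 1), …, (c (m-2), c (m-1))` of length
`m - 1` on pairwise distinct vertices, and a strict subset `U` of its arcs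
(encoded by its index set `U ⊂ {0, …, m-2}`), the path inequality
`∑_{(i,j)∈P} z_{i,j} + ∑_{(i,j)∈U} y_{i,j} + y_{i₁,i_m} ≤ m - 1` is valid for
`CCP(n,m)`; equivalently, for every surjective `κ : V → ZMod m`, if for every
arc `(i,j)` of the path either `κ j = κ i + 1`, or the arc lies in `U` and
`κ i = κ j`, then `κ (c 0) ≠ κ (c (m-1))`. -/
theorem path_inequality (n m : ℕ) (hm : 3 ≤ m) (c : ℕ → Fin n)
    (hinj : ∀ t₁ < m, ∀ t₂ < m, c t₁ = c t₂ → t₁ = t₂)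
    (U : Finset ℕ) (hU : U ⊂ Finset.range (m - 1)) :
    (∀ v ∈ CCP n m,
      ∑ t ∈ Finset.range (m - 1), Zc v (c t) (c (t + 1))
        + ∑ t ∈ U, Yc v (c t) (c (t + 1)) + Yc v (c 0) (c (m - 1))
        ≤ (m : ℝ) - 1) ∧
    (∀ κ : Fin n → ZMod m, Function.Surjective κ →
      (∀ t < m - 1, κ (c (t + 1)) = κ (c t) + 1 ∨ (t ∈ U ∧ κ (c t) = κ (c (t + 1)))) →
      κ (c 0) ≠ κ (c (m - 1))) := by

  constructor
  · intro v hv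
    have hconv : Convex ℝ {w : CCIdx n m → ℝ |
        ∑ t ∈ Finset.range (m - 1), Zc w (c t) (c (t + 1))
          + ∑ t ∈ U, Yc w (c t) (c (t + 1)) + Yc w (c 0) (c (m - 1)) ≤ (m : ℝ) - 1} := by
      intro x1 hx1 x2 hx2 a b ha hb hab
      simp only [Set.mem_setOf_eq] at hx1 hx2 ⊢
      have e : ∑ t ∈ Finset.range (m - 1), Zc (a • x1 + b • x2) (c t) (c (t + 1))
          + ∑ t ∈ U, Yc (a • x1 + b • x2) (c t) (c (t + 1))
          + Yc (a • x1 + b • x2) (c 0) (c (m - 1))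
          = a * (∑ t ∈ Finset.range (m - 1), Zc x1 (c t) (c (t + 1))
              + ∑ t ∈ U, Yc x1 (c t) (c (t + 1)) + Yc x1 (c 0) (c (m - 1)))
            + b * (∑ t ∈ Finset.range (m - 1), Zc x2 (c t) (c (t + 1))
              + ∑ t ∈ U, Yc x2 (c t) (c (t + 1)) + Yc x2 (c 0) (c (m - 1))) := by
        simp only [Zc_combo, Yc_combo, Finset.sum_add_distrib, ← Finset.mul_sum]
        ring
      rw [e]
      nlinarith [mul_le_mul_of_nonneg_left hx1 ha, mul_le_mul_of_nonneg_left hx2 hb]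
    have hsub : {w : CCIdx n m → ℝ | ∃ κ : Fin n → ZMod m, Function.Surjective κ ∧ w = incVec κ}
        ⊆ {w : CCIdx n m → ℝ |
        ∑ t ∈ Finset.range (m - 1), Zc w (c t) (c (t + 1))
          + ∑ t ∈ U, Yc w (c t) (c (t + 1)) + Yc w (c 0) (c (m - 1)) ≤ (m : ℝ) - 1} := by
      rintro w ⟨κ, hκ, rfl⟩
      exact vertex_bound n m hm c hinj U hU κ
    exact convexHull_min hsub hconv hv
  · intro κ hκ hstep
    exact path_key n m hm c U hU κ hstep


end
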